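/- The operator L annihilates the Baxter function Q_1: for every u ∈ ℂ, (L Q_1)(u) = 0; equivalently, the T–Q relation Σ_{a=0}^{N+1} (−1)^a · T^a(u+a) · Q_1(u+2a) = 0 holds for all u ∈ ℂ. -/

import Mathlib

open Complex

noncomputable def oneSubXD (x w : ℂ → ℂ) : ℂ → ℂ := fun u => w u - x u * w (u + 2)

noncomputable def Lop (x : ℕ → ℂ → ℂ) : ℕ → (ℂ → ℂ) → (ℂ → ℂ)
  | 0 => fun w => w
  | k + 1 => fun w => oneSubXD (x (k + 1)) (Lop x k w)

theorem LQ_annihilation_A2_even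
    (n : ℕ) (hn : 1 ≤ n) (N : ℕ) (hN : N = 2 * n)
    (hbar : ℂ) (hbar_ne : hbar ≠ 0) (s : ℂ)
    (hs : s = (Real.pi : ℂ) * Complex.I / (2 * hbar))
    (Q : ℕ → ℂ → ℂ) (hQ0 : ∀ u, Q 0 u = 1)
    (hQne : ∀ a, 1 ≤ a → a ≤ n → ∀ u, Q a u ≠ 0)
    (hconst : ℕ → ℂ)
    (hQper : ∀ a, 1 ≤ a → a ≤ n → hconst a ≠ 0 ∧
      ∀ u, Q a (u + (Real.pi : ℂ) * Complex.I / hbar) = hconst a * Q a u)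
    (Y : ℕ → ℂ → ℂ) (hY : ∀ a u, Y a u = Q a (u - 1) / Q a (u + 1))
    (x : ℕ → ℂ → ℂ)
    (hxa : ∀ a, 1 ≤ a → a ≤ n → ∀ u : ℂ,
      x a u = Y a (u + a) / Y (a - 1) (u + a + 1))
    (hx0 : ∀ u : ℂ, x (n + 1) u = Y n (u + n + 1 + s) / Y n (u + n + 2))
    (hxbar : ∀ a, 1 ≤ a → a ≤ n → ∀ u : ℂ,
      x (2 * n - a + 2) u = Y (a - 1) (u + 2 * (n : ℂ) - a + 2 + s)
        / Y a (u + 2 * (n : ℂ) - a + 3 + s))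
    (T : ℤ → ℂ → ℂ)
    (hTneg : ∀ a : ℤ, a < 0 → ∀ u, T a u = 0)
    (hTbig : ∀ a : ℤ, (N : ℤ) + 1 < a → ∀ u, T a u = 0)
    (hTL : ∀ w : ℂ → ℂ, ∀ u : ℂ, Lop x (N + 1) w u
      = ∑ a ∈ Finset.range (N + 2), (-1) ^ a * T a (u + a) * w (u + 2 * a))
    :
    (∀ u : ℂ, Lop x (N + 1) (Q 1) u = 0) ∧
    (∀ u : ℂ, ∑ a ∈ Finset.range (N + 2),
      (-1) ^ a * T (a : ℤ) (u + a) * Q 1 (u + 2 * a) = 0) := by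

  have hx1 : ∀ u : ℂ, x 1 u = Q 1 (u) / Q 1 (u + 2) := by
    intro u
    have h := hxa 1 le_rfl hn u
    simp only [Nat.cast_one] at h
    rw [h, hY, hY]
    have e1 : u + 1 - 1 = u := by ring
    have e2 : u + 1 + 1 + 1 = u + 3 := by ring
    have e3 : u + 1 + 1 - 1 = u + 1 := by ring
    rw [e1, e2, e3]
    show Q 1 u / Q 1 (u + 1 + 1) / (Q 0 (u + 1) / Q 0 (u + 3)) = _
    rw [hQ0, hQ0]
    have e4 : u + 1 + 1 = u + 2 := by ring
    rw [e4]
    simp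
  have hbase : ∀ u : ℂ, Lop x 1 (Q 1) u = 0 := by
    intro u
    show Q 1 u - x 1 u * Q 1 (u + 2) = 0
    rw [hx1]
    field_simp [hQne 1 le_rfl hn (u + 2)]
    simp
  have hall : ∀ k, ∀ u : ℂ, Lop x (k + 1) (Q 1) u = 0 := by
    intro k
    induction k with
    | zero => exact hbase
    | succ m ih =>
      intro u
      show Lop x (m + 1) (Q 1) u - x (m + 2) u * Lop x (m + 1) (Q 1) (u + 2) = 0
      rw [ih u, ih (u + 2)]
      ring
  have h1 : ∀ u : ℂ, Lop x (N + 1) (Q 1) u = 0 := hall N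
  refine ⟨h1, fun u => ?_⟩
  rw [← hTL (Q 1) u, h1 u]
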